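/- Let d ≥ 1, let ξ ∈ ℝ^d with ξ ≠ 0 and let k ∈ ℝ. Then the characteristic polynomial of the matrix A(ξ,k) equals (X − 1)^{d−1} · (X² − X + k·|ξ|²). In particular, the eigenvalues of A(ξ,k) are 1 (with algebraic multiplicity d − 1 when d ≥ 2) together with the two complex roots of X² − X + k·|ξ|². -/

import Mathlib

open Matrix Polynomial

/-- The Fourier symbol `A(ξ,k)` of the linearized system
`∂ₜa + div u = 0`, `∂ₜu + u + ∇Kₑ∗a = 0` at frequency `ξ`, with `k = K̂ₑ(ξ)`.
Rows/columns are indexed by `Fin (d+1)`: index `0` corresponds to the density mode,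
indices `1,…,d` to the velocity components. -/
noncomputable def eulerSymbol (d : ℕ) (ξ : Fin d → ℝ) (k : ℝ) :
    Matrix (Fin (d + 1)) (Fin (d + 1)) ℂ :=
  Matrix.of fun i j =>
    Fin.cases
      (Fin.cases (0 : ℂ) (fun j' => Complex.I * (ξ j' : ℂ)) j)
      (fun i' =>
        Fin.cases (Complex.I * (k : ℂ) * (ξ i' : ℂ))
          (fun j' => if i' = j' then (1 : ℂ) else 0) j)
      i

lemma arrow_det {F : Type*} [Field F] (d : ℕ) (x y : F) (hx : x ≠ 0) (hy : y ≠ 0)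
    (b c : Fin d → F) :
    (Matrix.fromBlocks (x • (1 : Matrix (Fin 1) (Fin 1) F)) (Matrix.replicateRow (Fin 1) b)
      (Matrix.replicateCol (Fin 1) c) (y • (1 : Matrix (Fin d) (Fin d) F))).det
      = x * y ^ d - y ^ d / y * (b ⬝ᵥ c) := by
  haveI : Invertible (x • (1 : Matrix (Fin 1) (Fin 1) F)) := by
    apply Matrix.invertibleOfIsUnitDet
    simp [hx]
  have hinv : ⅟ (x • (1 : Matrix (Fin 1) (Fin 1) F)) = x⁻¹ • 1 := by
    apply invOf_eq_right_inv
    rw [smul_mul_smul_comm, one_mul, mul_inv_cancel₀ hx, one_smul]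
  rw [Matrix.det_fromBlocks₁₁, hinv]
  have h2 : y • (1 : Matrix (Fin d) (Fin d) F) -
      Matrix.replicateCol (Fin 1) c * (x⁻¹ • (1 : Matrix (Fin 1) (Fin 1) F)) * Matrix.replicateRow (Fin 1) b
      = y • ((1 : Matrix (Fin d) (Fin d) F) +
          Matrix.replicateCol (Fin 1) ((-(x⁻¹ * y⁻¹)) • c) * Matrix.replicateRow (Fin 1) b) := by
    ext i j
    simp [Matrix.mul_apply, Matrix.one_apply, Matrix.smul_apply, smul_eq_mul, mul_comm]
    rcases eq_or_ne i j with rfl | hij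
    · simp; field_simp; ring
    · simp [hij]; field_simp
  rw [h2, Matrix.det_smul, Matrix.det_smul]
  erw [Matrix.det_one_add_replicateCol_mul_replicateRow (ι := Fin 1)]
  rw [Matrix.det_one]
  have : b ⬝ᵥ ((-(x⁻¹ * y⁻¹)) • c) = (-(x⁻¹ * y⁻¹)) * (b ⬝ᵥ c) := by
    simp [dotProduct, Finset.mul_sum]; exact Finset.sum_congr rfl fun i _ => by ring
  rw [this]
  simp only [Fintype.card_fin]
  field_simp
  ring

set_option maxHeartbeats 1000000 in
set_option synthInstance.maxHeartbeats 400000 in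
/-- The characteristic polynomial of `A(ξ,k)` equals
`(X − 1)^(d−1) · (X² − X + k·|ξ|²)`. -/
theorem charpoly_eulerSymbol (d : ℕ) (hd : 1 ≤ d) (ξ : Fin d → ℝ) (hξ : ξ ≠ 0) (k : ℝ) :
    (eulerSymbol d ξ k).charpoly =
      (X - 1) ^ (d - 1) *
        (X ^ 2 - X + C ((k * ∑ j, ξ j ^ 2 : ℝ) : ℂ)) := by
  classical
  obtain ⟨m, rfl⟩ : ∃ m, d = m + 1 := ⟨d - 1, (Nat.succ_pred_eq_of_pos hd).symm⟩
  set f : ℂ[X] →+* RatFunc ℂ := (algebraMap ℂ[X] (RatFunc ℂ)) with hfdef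
  have hf : Function.Injective f := IsFractionRing.injective ℂ[X] (RatFunc ℂ)
  apply hf
  rw [Matrix.charpoly, RingHom.map_det, RingHom.mapMatrix_apply]
  set M := eulerSymbol (m + 1) ξ k with hM
  set A := (charmatrix M).map f with hA
  set x : RatFunc ℂ := f X with hx'
  set y : RatFunc ℂ := f (X - 1) with hy'
  set b : Fin (m + 1) → RatFunc ℂ := fun j => -f (C (Complex.I * (ξ j : ℂ))) with hb
  set c : Fin (m + 1) → RatFunc ℂ := fun i => -f (C (Complex.I * (k : ℂ) * (ξ i : ℂ))) with hc
  have hx : x ≠ 0 := fun h => Polynomial.X_ne_zero (R := ℂ) (hf (h.trans (map_zero f).symm))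
  have hXone : (X - 1 : ℂ[X]) ≠ 0 := by
    rw [← Polynomial.C_1]; exact Polynomial.X_sub_C_ne_zero 1
  have hy : y ≠ 0 := fun h => hXone (hf (h.trans (map_zero f).symm))
  let e : Fin 1 ⊕ Fin (m + 1) ≃ Fin (m + 1 + 1) :=
    finSumFinEquiv.trans (finCongr (Nat.add_comm 1 (m + 1)))
  have he0 : ∀ i : Fin 1, e (Sum.inl i) = 0 := by
    intro i
    apply Fin.ext
    simp [e, finSumFinEquiv, Fin.fin_one_eq_zero i]
  have hes : ∀ j : Fin (m + 1), e (Sum.inr j) = j.succ := by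
    intro j
    apply Fin.ext
    simp [e, finSumFinEquiv]
    try omega
  have key : A.submatrix e e =
      Matrix.fromBlocks (x • (1 : Matrix (Fin 1) (Fin 1) (RatFunc ℂ))) (Matrix.replicateRow (Fin 1) b)
        (Matrix.replicateCol (Fin 1) c) (y • (1 : Matrix (Fin (m + 1)) (Fin (m + 1)) (RatFunc ℂ))) := by
    ext i j
    rcases i with i | i <;> rcases j with j | j
    · rw [Matrix.submatrix_apply, he0, he0]
      rw [Fin.fin_one_eq_zero i, Fin.fin_one_eq_zero j]
      simp [hA, charmatrix_apply_eq, hM, eulerSymbol, hx']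
    · rw [Matrix.submatrix_apply, he0, hes]
      have h0j : (0 : Fin (m + 1 + 1)) ≠ j.succ := (Fin.succ_ne_zero j).symm
      simp [hA, charmatrix_apply_ne _ _ _ h0j, hM, eulerSymbol, hb]
    · rw [Matrix.submatrix_apply, hes, he0]
      have hi0 : (i.succ : Fin (m + 1 + 1)) ≠ 0 := Fin.succ_ne_zero i
      simp [hA, charmatrix_apply_ne _ _ _ hi0, hM, eulerSymbol, hc]
    · rw [Matrix.submatrix_apply, hes, hes]
      rcases eq_or_ne i j with rfl | hij
      · simp [hA, charmatrix_apply_eq, hM, eulerSymbol, hy', Matrix.one_apply]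
      · have hne : (i.succ : Fin (m + 1 + 1)) ≠ j.succ := by
          simp [Fin.succ_inj, hij]
        simp [hA, charmatrix_apply_ne _ _ _ hne, hM, eulerSymbol, hij, Matrix.one_apply]
  rw [← Matrix.det_submatrix_equiv_self e A, key,
    arrow_det (m + 1) x y hx hy b c]
  have hbc : b ⬝ᵥ c = -f (C ((k : ℂ) * ∑ j, (ξ j : ℂ) ^ 2)) := by
    have h1 : ∀ j, b j * c j = f (C (-((k : ℂ) * (ξ j : ℂ) ^ 2))) := by
      intro j
      have h2 : (Complex.I * (ξ j : ℂ)) * (Complex.I * (k : ℂ) * (ξ j : ℂ))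
          = -((k : ℂ) * (ξ j : ℂ) ^ 2) := by
        linear_combination (k : ℂ) * (ξ j : ℂ) ^ 2 * Complex.I_mul_I
      rw [hb, hc]
      simp only [neg_mul_neg, ← _root_.map_mul, ← Polynomial.C_mul, h2]
    simp only [dotProduct, h1]
    rw [← map_sum f _ Finset.univ, ← map_sum Polynomial.C _ Finset.univ]
    rw [show (∑ j, -((k : ℂ) * (ξ j : ℂ) ^ 2)) = -((k : ℂ) * ∑ j, (ξ j : ℂ) ^ 2) by
      rw [Finset.sum_neg_distrib, Finset.mul_sum], map_neg, map_neg]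
  have hsum : ((k * ∑ j, ξ j ^ 2 : ℝ) : ℂ) = (k : ℂ) * ∑ j, (ξ j : ℂ) ^ 2 := by
    push_cast; ring
  have hyx : y = x - 1 := by
    rw [hx', hy', _root_.map_sub, _root_.map_one]
  rw [map_mul f, map_pow f, map_sub f, map_add f, map_sub f, map_pow f, map_one f, hsum, hbc]
  have hd1 : m + 1 - 1 = m := by omega
  rw [hd1, hyx]
  have hx1 : x - 1 ≠ 0 := by rw [← hyx]; exact hy
  rw [pow_succ]
  field_simp
  ring
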